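/- Let G = (V,E) be a finite simple graph, let t ≥ 1 be an integer, let v ∈ V, let L ⊆ V, and let r ≥ 2 be an integer. Set C = B_r(v) ∩ L. If |B_r(v) ∩ L| ≤ (1 + 1/t)·|B_{r−2}(v) ∩ L|, then |C ∩ B_2(L \ C)| ≤ |C| / t. -/

import Mathlib

open SimpleGraph

variable {V : Type*}

/-- The ball of radius `j` (w.r.t. the shortest-path distance in `G`) around `v`. -/
def sball (G : SimpleGraph V) (v : V) (j : ℕ) : Set V := {u | G.edist v u ≤ (j : ℕ∞)}

/-- The ball of radius `j` around a set `S` of vertices. -/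
def setBall (G : SimpleGraph V) (S : Set V) (j : ℕ) : Set V :=
  {u | ∃ w ∈ S, G.edist w u ≤ (j : ℕ∞)}

theorem stmt4 [Fintype V] (G : SimpleGraph V) (t : ℕ) (ht : 1 ≤ t) (v : V) (L : Set V)
    (r : ℕ) (hr : 2 ≤ r)
    (h : ((sball G v r ∩ L).ncard : ℝ)
        ≤ (1 + 1 / (t : ℝ)) * ((sball G v (r - 2) ∩ L).ncard : ℝ)) :
    (((sball G v r ∩ L) ∩ setBall G (L \ (sball G v r ∩ L)) 2).ncard : ℝ)
      ≤ ((sball G v r ∩ L).ncard : ℝ) / (t : ℝ) := by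
  classical
  set C := sball G v r ∩ L with hC
  set A := sball G v (r - 2) ∩ L with hA
  set X := C ∩ setBall G (L \ C) 2 with hX
  have hAC : A ⊆ C := by
    intro u hu
    refine ⟨?_, hu.2⟩
    have := hu.1
    simp only [sball, Set.mem_setOf_eq] at this ⊢
    exact this.trans (by exact_mod_cast Nat.cast_le.mpr (Nat.sub_le r 2))
  -- X ⊆ C \ A
  have hXCA : X ⊆ C \ A := by
    rintro u ⟨huC, w, hw, hwu⟩
    refine ⟨huC, fun huA => ?_⟩
    have hwr : ¬ G.edist v w ≤ (r : ℕ∞) := fun hle => hw.2 ⟨hle, hw.1⟩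
    apply hwr
    have h1 : G.edist v u ≤ ((r - 2 : ℕ) : ℕ∞) := huA.1
    have h2 : G.edist u w ≤ (2 : ℕ∞) := by
      rw [edist_comm]; exact_mod_cast hwu
    calc G.edist v w ≤ G.edist v u + G.edist u w := G.edist_triangle
      _ ≤ ((r - 2 : ℕ) : ℕ∞) + 2 := add_le_add h1 h2
      _ = (r : ℕ∞) := by
          rw [show ((2 : ℕ∞)) = ((2 : ℕ) : ℕ∞) from rfl, ← Nat.cast_add,
            Nat.sub_add_cancel hr]
  have hfin : C.Finite := Set.toFinite C
  have hcard : X.ncard ≤ C.ncard - A.ncard := by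
    calc X.ncard ≤ (C \ A).ncard := Set.ncard_le_ncard hXCA hfin.diff
      _ = C.ncard - A.ncard := Set.ncard_diff hAC (hfin.subset hAC)
  have hAleC : A.ncard ≤ C.ncard := Set.ncard_le_ncard hAC hfin
  have hXR : (X.ncard : ℝ) ≤ (C.ncard : ℝ) - (A.ncard : ℝ) := by
    have := hcard
    push_cast [Nat.cast_sub hAleC] at this ⊢
    exact_mod_cast Nat.cast_le.mpr hcard |>.trans_eq (by push_cast [Nat.cast_sub hAleC]; ring)
  have htp : (0 : ℝ) < t := by exact_mod_cast ht
  have hACr : (A.ncard : ℝ) ≤ (C.ncard : ℝ) := by exact_mod_cast hAleC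
  calc (X.ncard : ℝ) ≤ (C.ncard : ℝ) - (A.ncard : ℝ) := hXR
    _ ≤ (A.ncard : ℝ) / t := by
        rw [le_div_iff₀ htp]
        have hmul := mul_le_mul_of_nonneg_right h (le_of_lt htp)
        have hone : (1 / (t:ℝ)) * t = 1 := one_div_mul_cancel (ne_of_gt htp)
        nlinarith
    _ ≤ (C.ncard : ℝ) / t := by
        gcongr
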